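/- Let p be an odd prime, α_p = exp(2πi/p), X and Z the p×p Heisenberg–Weyl matrices, and P_p the control-phase unitary on ℂ^p ⊗ ℂ^p determined by P_p(|s⟩ ⊗ |t⟩) = α_p^{st} |s⟩ ⊗ |t⟩. Then for all integers α, β, n, θ there exists c ∈ ℂ with |c| = 1 such that P_p^{θn} (X^α ⊗ X^β Z^{2βn}) P_p^{−θn} = c · (X^α Z^{βθn}) ⊗ (X^β Z^{2βn + αθn}), where all exponents of X and Z are taken mod p. -/

import Mathlib

open Kronecker

/-- `α_p = exp(2πi/p)`, the `p`-th root of unity. -/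
noncomputable def rootOfUnity (p : ℕ) : ℂ := Complex.exp (2 * Real.pi * Complex.I / p)

/-- The cyclic shift `X`, with `X|s⟩ = |s+1 mod p⟩`. -/
def Xmat (p : ℕ) : Matrix (Fin p) (Fin p) ℂ :=
  fun t s => if (t : ZMod p) = (s : ZMod p) + 1 then 1 else 0

/-- The clock matrix `Z = diag(1, α_p, α_p², …, α_p^{p−1})`. -/
noncomputable def Zmat (p : ℕ) : Matrix (Fin p) (Fin p) ℂ :=
  Matrix.diagonal fun s : Fin p => rootOfUnity p ^ (s : ℕ)

/-- The control-phase `P_p`, the diagonal unitary with `P_p(|s⟩⊗|t⟩) = α_p^{st}|s⟩⊗|t⟩`. -/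
noncomputable def cphase (p : ℕ) : Matrix (Fin p × Fin p) (Fin p × Fin p) ℂ :=
  Matrix.diagonal fun st : Fin p × Fin p => rootOfUnity p ^ ((st.1 : ℕ) * (st.2 : ℕ))

section aux
variable (p : ℕ) [NeZero p]

lemma root_abs : ‖rootOfUnity p‖ = 1 := by
  have : (2 * (Real.pi : ℂ) * Complex.I / p) = ((2 * Real.pi / p : ℝ) : ℂ) * Complex.I := by
    push_cast; ring
  rw [rootOfUnity, this, Complex.norm_exp_ofReal_mul_I]

lemma root_pow_p : rootOfUnity p ^ p = 1 := by
  have hp : (p : ℂ) ≠ 0 := Nat.cast_ne_zero.mpr (NeZero.ne p)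
  rw [rootOfUnity, ← Complex.exp_nat_mul]
  have : (p : ℂ) * (2 * (Real.pi : ℂ) * Complex.I / p) = 2 * Real.pi * Complex.I := by
    field_simp
  rw [this, Complex.exp_two_pi_mul_I]

lemma root_pow_mod (j : ℕ) : rootOfUnity p ^ j = rootOfUnity p ^ (j % p) := by
  conv_lhs => rw [← Nat.mod_add_div j p]
  rw [pow_add, pow_mul, root_pow_p, one_pow, mul_one]

lemma root_pow_congr {j k : ℕ} (h : (j : ZMod p) = (k : ZMod p)) :
    rootOfUnity p ^ j = rootOfUnity p ^ k := by
  rw [root_pow_mod p j, root_pow_mod p k,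
    (ZMod.natCast_eq_natCast_iff j k p).mp h]

lemma fin_cast_inj {t s : Fin p} (h : ((t : ℕ) : ZMod p) = ((s : ℕ) : ZMod p)) : t = s := by
  have := congrArg ZMod.val h
  rwa [ZMod.val_cast_of_lt t.isLt, ZMod.val_cast_of_lt s.isLt, ← Fin.ext_iff] at this

lemma Xpow_apply (k : ℕ) (t s : Fin p) :
    (Xmat p ^ k) t s = if ((t : ℕ) : ZMod p) = ((s : ℕ) : ZMod p) + (k : ℕ) then 1 else 0 := by
  induction k generalizing s with
  | zero =>
    simp only [pow_zero, Matrix.one_apply, Nat.cast_zero, add_zero]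
    congr 1
    by_cases h : ((t : ℕ) : ZMod p) = ((s : ℕ) : ZMod p)
    · simp [fin_cast_inj p h, h]
    · simp [h]; rintro rfl; exact h rfl
  | succ k ih =>
    rw [pow_succ, Matrix.mul_apply]
    set u0 : Fin p := ⟨(((s : ℕ) : ZMod p) + 1).val, ZMod.val_lt _⟩ with hu0
    have hu0c : ((u0 : ℕ) : ZMod p) = ((s : ℕ) : ZMod p) + 1 :=
      ZMod.natCast_rightInverse _
    rw [Finset.sum_eq_single u0]
    · rw [ih, Xmat, if_pos hu0c, mul_one, hu0c]
      congr 2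
      push_cast
      ring
    · intro u _ hu
      rw [Xmat]
      rw [if_neg, mul_zero]
      intro hc
      exact hu (fin_cast_inj p (hc.trans hu0c.symm))
    · intro h; exact absurd (Finset.mem_univ u0) h

end aux

/-- Conjugation by powers of the control-phase maps `X^α ⊗ X^β Z^{2βn}` to
`X^α Z^{βθn} ⊗ X^β Z^{2βn + αθn}` up to a phase `c` of modulus one, all exponents mod `p`. -/
theorem cphase_conj_heisenberg_weyl (p : ℕ) (hp : p.Prime) (hodd : Odd p)
    (a b n θ : ℤ) :
    ∃ c : ℂ, ‖c‖ = 1 ∧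
      cphase p ^ (((θ * n : ℤ) : ZMod p)).val
          * ((Xmat p ^ ((a : ZMod p)).val) ⊗ₖ
              (Xmat p ^ ((b : ZMod p)).val * Zmat p ^ (((2 * b * n : ℤ) : ZMod p)).val))
          * cphase p ^ (((-(θ * n) : ℤ) : ZMod p)).val
        = c • ((Xmat p ^ ((a : ZMod p)).val * Zmat p ^ (((b * θ * n : ℤ) : ZMod p)).val) ⊗ₖ
            (Xmat p ^ ((b : ZMod p)).val
              * Zmat p ^ (((2 * b * n + a * θ * n : ℤ) : ZMod p)).val)) := by
  haveI : NeZero p := ⟨hp.ne_zero⟩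
  set ω := rootOfUnity p with hω
  set M : ℕ := (((θ * n : ℤ) : ZMod p)).val with hM
  set M' : ℕ := (((-(θ * n) : ℤ) : ZMod p)).val with hM'
  set A : ℕ := ((a : ZMod p)).val with hA
  set B : ℕ := ((b : ZMod p)).val with hB
  set C : ℕ := (((2 * b * n : ℤ) : ZMod p)).val with hC
  set D : ℕ := (((b * θ * n : ℤ) : ZMod p)).val with hD
  set E : ℕ := (((2 * b * n + a * θ * n : ℤ) : ZMod p)).val with hE
  refine ⟨ω ^ (M * A * B), by simp [map_pow, root_abs p, hω], ?_⟩
  ext ⟨t1, t2⟩ ⟨s1, s2⟩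
  have hZ : ∀ (k : ℕ), Zmat p ^ k = Matrix.diagonal (fun s : Fin p => ω ^ ((s : ℕ) * k)) := by
    intro k
    rw [Zmat, Matrix.diagonal_pow]
    exact congrArg _ (funext fun s => by rw [Pi.pow_apply, ← pow_mul])
  have hP : ∀ (k : ℕ), cphase p ^ k
      = Matrix.diagonal (fun st : Fin p × Fin p => ω ^ (k * ((st.1 : ℕ) * (st.2 : ℕ)))) := by
    intro k
    rw [cphase, Matrix.diagonal_pow]
    exact congrArg _ (funext fun st => by rw [Pi.pow_apply, ← pow_mul, mul_comm])
  rw [hP, hP, hZ, hZ, hZ]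
  simp only [Matrix.mul_diagonal, Matrix.diagonal_mul, Matrix.smul_apply,
    Matrix.kroneckerMap_apply, Xpow_apply, smul_eq_mul]
  by_cases h1 : ((t1 : ℕ) : ZMod p) = ((s1 : ℕ) : ZMod p) + (A : ℕ)
  · by_cases h2 : ((t2 : ℕ) : ZMod p) = ((s2 : ℕ) : ZMod p) + (B : ℕ)
    · rw [if_pos h1, if_pos h2]
      simp only [one_mul, mul_one]
      simp only [← pow_add]
      apply root_pow_congr
      have hMv : ((M : ℕ) : ZMod p) = ((θ * n : ℤ) : ZMod p) := ZMod.natCast_rightInverse _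
      have hM'v : ((M' : ℕ) : ZMod p) = ((-(θ * n) : ℤ) : ZMod p) := ZMod.natCast_rightInverse _
      have hAv : ((A : ℕ) : ZMod p) = ((a : ℤ) : ZMod p) := ZMod.natCast_rightInverse _
      have hBv : ((B : ℕ) : ZMod p) = ((b : ℤ) : ZMod p) := ZMod.natCast_rightInverse _
      have hCv : ((C : ℕ) : ZMod p) = ((2 * b * n : ℤ) : ZMod p) := ZMod.natCast_rightInverse _
      have hDv : ((D : ℕ) : ZMod p) = ((b * θ * n : ℤ) : ZMod p) := ZMod.natCast_rightInverse _
      have hEv : ((E : ℕ) : ZMod p) = ((2 * b * n + a * θ * n : ℤ) : ZMod p) :=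
        ZMod.natCast_rightInverse _
      push_cast [hMv, hM'v, hAv, hBv, hCv, hDv, hEv] at h1 h2 ⊢
      rw [h1, h2]
      push_cast
      ring
    · rw [if_neg h2]
      ring
  · rw [if_neg h1]
    ring
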